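/- arXiv:0903.0907 — 2 statements merged into one kernel-verified Lean document; each statement's English description precedes it below -/
import Mathlib

section
/- Let g : ℝᴺ → ℝᵈ be strictly differentiable at a point q with g(q) = 0, and suppose the derivative Dg(q) : ℝᴺ → ℝᵈ is surjective. Then the tangent cone at q of the level set g⁻¹({0}) equals the kernel of Dg(q); that is, tangentConeAt ℝ (g⁻¹{0}) q = {w ∈ ℝᴺ : Dg(q)(w) = 0}. -/
open Filter Set Topology

theorem stmt_5 (N d : ℕ)
    (g : EuclideanSpace ℝ (Fin N) → EuclideanSpace ℝ (Fin d))
    (q : EuclideanSpace ℝ (Fin N))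
    (hg : HasStrictFDerivAt g (fderiv ℝ g q) q)
    (hq : g q = 0)
    (hsurj : Function.Surjective (fderiv ℝ g q)) :
    tangentConeAt ℝ (g ⁻¹' {0}) q = {w | fderiv ℝ g q w = 0} := by
  set f' := fderiv ℝ g q with hf'
  have hrange : LinearMap.range (f' : EuclideanSpace ℝ (Fin N) →ₗ[ℝ] EuclideanSpace ℝ (Fin d)) = ⊤ :=
    (LinearMap.range_eq_top (f := (f' : EuclideanSpace ℝ (Fin N) →ₗ[ℝ] EuclideanSpace ℝ (Fin d)))).2 hsurj
  apply Set.Subset.antisymm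
  · -- tangent cone ⊆ ker
    intro v hv
    have h1 := hg.hasFDerivAt.hasFDerivWithinAt.mapsTo_tangent_cone (s := g ⁻¹' {0}) hv
    have h2 : tangentConeAt ℝ (g '' (g ⁻¹' {0})) (g q)
        ⊆ tangentConeAt ℝ {(0 : EuclideanSpace ℝ (Fin d))} (g q) :=
      tangentConeAt_mono (Set.image_preimage_subset _ _)
    have h3 := h2 h1
    rw [hq] at h3
    obtain ⟨α, l, hl, c, w, -, hw, hcw⟩ := exists_fun_of_mem_tangentConeAt h3
    have hw0 : ∀ᶠ n in l, c n • w n = 0 := by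
      filter_upwards [hw] with n hn
      have : w n = 0 := by simpa using hn
      simp [this]
    have : Tendsto (fun n => c n • w n) l (𝓝 0) :=
      tendsto_const_nhds.congr' (hw0.mono fun n hn => hn.symm)
    exact (tendsto_nhds_unique hcw this)
  · -- ker ⊆ tangent cone
    intro v hv
    set ψ := hg.implicitFunction g f' hrange 0 with hψ
    have hS : ∀ᶠ x in 𝓝 (0 : LinearMap.ker (f' : EuclideanSpace ℝ (Fin N) →ₗ[ℝ] EuclideanSpace ℝ (Fin d))), g (ψ x) = 0 := by
      have h := hg.map_implicitFunction_eq hrange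
      rw [hq] at h
      have ht : Tendsto (fun x : LinearMap.ker (f' : EuclideanSpace ℝ (Fin N) →ₗ[ℝ] EuclideanSpace ℝ (Fin d)) =>
          ((0 : EuclideanSpace ℝ (Fin d)), x)) (𝓝 0) (𝓝 (0, 0)) :=
        tendsto_const_nhds.prodMk_nhds tendsto_id
      exact ht.eventually h
    set S : Set (LinearMap.ker (f' : EuclideanSpace ℝ (Fin N) →ₗ[ℝ] EuclideanSpace ℝ (Fin d))) := {x | g (ψ x) = 0} with hSdef
    have hSnhds : S ∈ 𝓝 (0 : LinearMap.ker (f' : EuclideanSpace ℝ (Fin N) →ₗ[ℝ] EuclideanSpace ℝ (Fin d))) := hS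
    have hψ0 : ψ 0 = q := by
      have := hg.implicitFunction_apply_image hrange
      rw [hq] at this
      exact this
    have hderiv : HasStrictFDerivAt ψ (LinearMap.ker (f' : EuclideanSpace ℝ (Fin N) →ₗ[ℝ] EuclideanSpace ℝ (Fin d))).subtypeL 0 := by
      have := hg.to_implicitFunction hrange
      rw [hq] at this
      exact this
    have hmaps : Set.MapsTo ((LinearMap.ker (f' : EuclideanSpace ℝ (Fin N) →ₗ[ℝ] EuclideanSpace ℝ (Fin d))).subtypeL) (tangentConeAt ℝ S 0)
        (tangentConeAt ℝ (ψ '' S) (ψ 0)) :=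
      HasFDerivWithinAt.mapsTo_tangent_cone (𝕜 := ℝ) (E := ↥(LinearMap.ker (f' : EuclideanSpace ℝ (Fin N) →ₗ[ℝ] EuclideanSpace ℝ (Fin d))))
        (F := EuclideanSpace ℝ (Fin N)) (f := ψ) (s := S)
        (f' := (LinearMap.ker (f' : EuclideanSpace ℝ (Fin N) →ₗ[ℝ] EuclideanSpace ℝ (Fin d))).subtypeL) (x := 0)
        (hderiv.hasFDerivAt.hasFDerivWithinAt)
    have hcone : tangentConeAt ℝ S (0 : LinearMap.ker (f' : EuclideanSpace ℝ (Fin N) →ₗ[ℝ] EuclideanSpace ℝ (Fin d))) = univ := by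
      have := tangentConeAt_inter_nhds (𝕜 := ℝ) (s := (univ : Set (LinearMap.ker (f' : EuclideanSpace ℝ (Fin N) →ₗ[ℝ] EuclideanSpace ℝ (Fin d)))))
        (x := (0 : LinearMap.ker (f' : EuclideanSpace ℝ (Fin N) →ₗ[ℝ] EuclideanSpace ℝ (Fin d)))) hSnhds
      rw [Set.univ_inter, tangentConeAt_univ] at this
      exact this
    have hmem := hmaps (show (⟨v, hv⟩ : LinearMap.ker (f' : EuclideanSpace ℝ (Fin N) →ₗ[ℝ] EuclideanSpace ℝ (Fin d))) ∈ tangentConeAt ℝ S 0 by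
      rw [hcone]; trivial)
    rw [Submodule.subtypeL_apply] at hmem
    rw [hψ0] at hmem
    refine tangentConeAt_mono ?_ hmem
    rintro _ ⟨x, hx, rfl⟩
    exact hx
end

section
/- Let g : ℝᴺ → ℝᵈ be twice continuously differentiable, let q₀ ∈ ℝᴺ satisfy g(q₀) = 0, and suppose Dg(q₀) : ℝᴺ → ℝᵈ is surjective. Define F : ℝᴺ × ℝᵈ → ℝᴺ × ℝᵈ by F(q, θ) = (q + (Dg(q))*(θ), g(q)). Then F has a strict Fréchet derivative at (q₀, 0) given by (δq, δθ) ↦ (δq + (Dg(q₀))*(δθ), Dg(q₀)(δq)), this derivative is a linear isomorphism of ℝᴺ × ℝᵈ, and consequently F is a local homeomorphism at (q₀, 0): there are open neighbourhoods U of (q₀, 0) and V of (q₀, 0) such that F restricts to a bijection from U onto V. -/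
theorem stmt_8 (N d : ℕ)
    (g : EuclideanSpace ℝ (Fin N) → EuclideanSpace ℝ (Fin d))
    (hg : ContDiff ℝ 2 g)
    (q₀ : EuclideanSpace ℝ (Fin N))
    (hq₀ : g q₀ = 0)
    (hsurj : Function.Surjective (fderiv ℝ g q₀))
    (F : EuclideanSpace ℝ (Fin N) × EuclideanSpace ℝ (Fin d) →
      EuclideanSpace ℝ (Fin N) × EuclideanSpace ℝ (Fin d))
    (hF : ∀ (q : EuclideanSpace ℝ (Fin N)) (θ : EuclideanSpace ℝ (Fin d)),
      F (q, θ) = (q + ContinuousLinearMap.adjoint (fderiv ℝ g q) θ, g q)) :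
    ∃ L : (EuclideanSpace ℝ (Fin N) × EuclideanSpace ℝ (Fin d)) ≃L[ℝ]
        (EuclideanSpace ℝ (Fin N) × EuclideanSpace ℝ (Fin d)),
      (∀ δ : EuclideanSpace ℝ (Fin N) × EuclideanSpace ℝ (Fin d),
        L δ = (δ.1 + ContinuousLinearMap.adjoint (fderiv ℝ g q₀) δ.2,
          fderiv ℝ g q₀ δ.1)) ∧
      HasStrictFDerivAt F (L : _ →L[ℝ] _) (q₀, 0) ∧
      ∃ U V : Set (EuclideanSpace ℝ (Fin N) × EuclideanSpace ℝ (Fin d)),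
        IsOpen U ∧ IsOpen V ∧ (q₀, 0) ∈ U ∧ (q₀, 0) ∈ V ∧ Set.BijOn F U V := by
  classical
  let E := EuclideanSpace ℝ (Fin N)
  let Fd := EuclideanSpace ℝ (Fin d)
  let A : E →L[ℝ] Fd := fderiv ℝ g q₀
  let T : E × Fd →L[ℝ] E × Fd :=
    ((ContinuousLinearMap.fst ℝ E Fd) +
      (ContinuousLinearMap.adjoint A).comp (ContinuousLinearMap.snd ℝ E Fd)).prod
      (A.comp (ContinuousLinearMap.fst ℝ E Fd))
  have hTapp : ∀ δ : E × Fd, T δ = (δ.1 + ContinuousLinearMap.adjoint A δ.2, A δ.1) :=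
    fun δ => rfl
  -- adjoint is injective since A is surjective
  have hadj_inj : ∀ θ : Fd, ContinuousLinearMap.adjoint A θ = 0 → θ = 0 := by
    intro θ h
    obtain ⟨x, hx⟩ := hsurj θ
    have h2 : (inner ℝ θ θ : ℝ) = 0 := by
      have : (inner ℝ (A x) θ : ℝ) = inner ℝ x (ContinuousLinearMap.adjoint A θ) :=
        (ContinuousLinearMap.adjoint_inner_right A x θ).symm
      rw [h, inner_zero_right] at this
      rw [← hx] at *
      exact this
    exact inner_self_eq_zero.mp h2
  -- T is injective
  have hTinj : Function.Injective T := by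
    rw [injective_iff_map_eq_zero]
    intro δ hδ
    rw [hTapp] at hδ
    have h1 : δ.1 + ContinuousLinearMap.adjoint A δ.2 = 0 := congrArg Prod.fst hδ
    have h2 : A δ.1 = 0 := congrArg Prod.snd hδ
    have hq : δ.1 = 0 := by
      have hinner : (inner ℝ δ.1 (ContinuousLinearMap.adjoint A δ.2) : ℝ) = 0 := by
        rw [ContinuousLinearMap.adjoint_inner_right, h2, inner_zero_left]
      have : (inner ℝ δ.1 δ.1 : ℝ) = 0 := by
        have := congrArg (fun v => (inner ℝ δ.1 v : ℝ)) h1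
        simpa [inner_add_right, hinner] using this
      exact inner_self_eq_zero.mp this
    have hθ : δ.2 = 0 := by
      apply hadj_inj
      have := h1
      rw [hq, zero_add] at this
      exact this
    exact Prod.ext hq hθ
  have hTbij : Function.Bijective T :=
    ⟨hTinj, LinearMap.injective_iff_surjective.mp hTinj⟩
  let Le : (E × Fd) ≃ₗ[ℝ] (E × Fd) := LinearEquiv.ofBijective (T : E × Fd →ₗ[ℝ] E × Fd) hTbij
  let L : (E × Fd) ≃L[ℝ] (E × Fd) := Le.toContinuousLinearEquiv
  have hLT : (L : E × Fd →L[ℝ] E × Fd) = T := by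
    ext δ <;> rfl
  -- strict differentiability
  let adj : (E →L[ℝ] Fd) ≃ₗᵢ[ℝ] (Fd →L[ℝ] E) := ContinuousLinearMap.adjoint
  let B : E → (Fd →L[ℝ] E) := fun q => ContinuousLinearMap.adjoint (fderiv ℝ g q)
  have hfd : ContDiff ℝ 1 (fderiv ℝ g) := hg.fderiv_right (by norm_num)
  have hB : ContDiff ℝ 1 B := adj.contDiff.comp hfd
  have hBs : HasStrictFDerivAt B (fderiv ℝ B q₀) q₀ := hB.hasStrictFDerivAt one_ne_zero
  let B' : E →L[ℝ] (Fd →L[ℝ] E) := fderiv ℝ B q₀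
  have hc : HasStrictFDerivAt (fun p : E × Fd => B p.1)
      (B'.comp (ContinuousLinearMap.fst ℝ E Fd)) (q₀, (0 : Fd)) :=
    hBs.comp (q₀, (0 : Fd)) hasStrictFDerivAt_fst
  have hu : HasStrictFDerivAt (fun p : E × Fd => p.2)
      (ContinuousLinearMap.snd ℝ E Fd) (q₀, (0 : Fd)) := hasStrictFDerivAt_snd
  have happ := hc.clm_apply hu
  have hgs : HasStrictFDerivAt (fun p : E × Fd => g p.1)
      (A.comp (ContinuousLinearMap.fst ℝ E Fd)) (q₀, (0 : Fd)) :=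
    (hg.hasStrictFDerivAt (by norm_num)).comp (q₀, (0 : Fd)) hasStrictFDerivAt_fst
  have hf1 : HasStrictFDerivAt (fun p : E × Fd => p.1 + B p.1 p.2)
      ((ContinuousLinearMap.fst ℝ E Fd) +
        ((B (q₀, (0:Fd)).1).comp (ContinuousLinearMap.snd ℝ E Fd) +
          (B'.comp (ContinuousLinearMap.fst ℝ E Fd)).flip ((q₀, (0:Fd)).2)))
      (q₀, (0 : Fd)) :=
    hasStrictFDerivAt_fst.add happ
  have hFs0 : HasStrictFDerivAt F
      (((ContinuousLinearMap.fst ℝ E Fd) +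
        ((B (q₀, (0:Fd)).1).comp (ContinuousLinearMap.snd ℝ E Fd) +
          (B'.comp (ContinuousLinearMap.fst ℝ E Fd)).flip ((q₀, (0:Fd)).2))).prod
        (A.comp (ContinuousLinearMap.fst ℝ E Fd))) (q₀, (0 : Fd)) := by
    have hFe : F = fun p : E × Fd => (p.1 + B p.1 p.2, g p.1) := by
      funext p
      obtain ⟨q, θ⟩ := p
      exact hF q θ
    rw [hFe]
    exact hf1.prodMk hgs
  have hderiv_eq :
      (((ContinuousLinearMap.fst ℝ E Fd) +
        ((B (q₀, (0:Fd)).1).comp (ContinuousLinearMap.snd ℝ E Fd) +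
          (B'.comp (ContinuousLinearMap.fst ℝ E Fd)).flip ((q₀, (0:Fd)).2))).prod
        (A.comp (ContinuousLinearMap.fst ℝ E Fd))) = T := by
    apply ContinuousLinearMap.ext
    intro δ
    rw [hTapp]
    simp [ContinuousLinearMap.prod_apply, ContinuousLinearMap.add_apply,
      ContinuousLinearMap.comp_apply, ContinuousLinearMap.flip_apply, B]
    rfl
  rw [hderiv_eq] at hFs0
  have hFs : HasStrictFDerivAt F (L : E × Fd →L[ℝ] E × Fd) (q₀, (0 : Fd)) := by
    rw [hLT]; exact hFs0
  refine ⟨L, ?_, hFs, ?_⟩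
  · intro δ
    show (L : E × Fd →L[ℝ] E × Fd) δ = _
    rw [hLT, hTapp]
  · -- inverse function theorem
    have hFs' : HasStrictFDerivAt F ((L : E × Fd →L[ℝ] E × Fd)) (q₀, (0 : Fd)) := hFs
    let ph := hFs'.toOpenPartialHomeomorph F (f' := L)
    refine ⟨ph.source, ph.target, ph.open_source, ph.open_target, ?_, ?_, ?_⟩
    · exact hFs'.mem_toOpenPartialHomeomorph_source (f' := L)
    · have h0 : F (q₀, (0 : Fd)) = (q₀, (0 : Fd)) := by
        rw [hF q₀ 0, map_zero, add_zero, hq₀]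
      have := hFs'.image_mem_toOpenPartialHomeomorph_target (f' := L)
      rwa [h0] at this
    · have hcoe : (ph : E × Fd → E × Fd) = F :=
        hFs'.toOpenPartialHomeomorph_coe (f' := L)
      have := ph.bijOn
      rwa [hcoe] at this
end
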